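/- For every continuous real-valued function f on [0,1] and all g, h ∈ L²(μ), ∫_0^1 f(θ) g(G(θ)) h(G(θ)) dμ(θ) = ∫_0^1 𝔾(f)(θ) g(θ) h(θ) dμ(θ); that is, V_G* M_f V_G = M_{𝔾(f)} as operators on L²(μ), where V_G(g) = g ∘ G and M_f denotes multiplication by f. -/

import Mathlib

open MeasureTheory

/-- The Gauss map `G(0) = 0`, `G(x) = 1/x - ⌊1/x⌋` for `x ≠ 0`. -/
noncomputable def gaussMap (x : ℝ) : ℝ := if x = 0 then 0 else 1 / x - ↑⌊1 / x⌋

/-- Gauss measure on `[0,1]`: `dμ = dθ / (ln 2 · (1 + θ))`. -/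
noncomputable def gaussMeasure : Measure ℝ :=
  (volume.restrict (Set.Icc (0 : ℝ) 1)).withDensity
    (fun θ => ENNReal.ofReal (1 / (Real.log 2 * (1 + θ))))

/-- The Gauss (Perron–Frobenius) operator
`𝔾(f)(θ) = Σ_{s=1}^∞ f(1/(θ+s)) · (1+θ)/((θ+s)(θ+s+1))`;
the summation index `n : ℕ` corresponds to `s = n + 1`. -/
noncomputable def gaussOp (f : ℝ → ℝ) (θ : ℝ) : ℝ :=
  ∑' n : ℕ, f (1 / (θ + (n : ℝ) + 1)) *
    ((1 + θ) / ((θ + (n : ℝ) + 1) * (θ + (n : ℝ) + 2)))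

open Set Filter ENNReal
open scoped NNReal

section aux

lemma GP.log2_pos : (0:ℝ) < Real.log 2 := Real.log_pos one_lt_two

noncomputable def GP.w (θ : ℝ) : ℝ := 1 / (Real.log 2 * (1 + θ))

lemma GP.w_meas : Measurable GP.w := by
  unfold GP.w
  exact measurable_const.div ((measurable_const.mul (measurable_const.add measurable_id)))

lemma GP.w_pos {θ : ℝ} (hθ : 0 ≤ θ) : 0 < GP.w θ := by
  unfold GP.w
  have := GP.log2_pos
  positivity

lemma GP.measurable_gaussMap : Measurable gaussMap := by
  unfold gaussMap
  refine Measurable.ite ?_ measurable_const ?_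
  · exact measurableSet_eq
  · exact (measurable_const.div measurable_id).sub
      ((Measurable.of_discrete (f := fun z : ℤ => (z:ℝ))).comp
        (Measurable.floor (measurable_const.div measurable_id)))

lemma GP.gaussMeasure_eq :
    gaussMeasure = (volume.restrict (Set.Icc (0 : ℝ) 1)).withDensity
      (fun θ => ((Real.toNNReal (GP.w θ) : ℝ≥0) : ℝ≥0∞)) := rfl

lemma GP.integral_gaussMeasure (F : ℝ → ℝ) :
    ∫ x, F x ∂gaussMeasure = ∫ x in Icc (0:ℝ) 1, GP.w x * F x := by
  rw [GP.gaussMeasure_eq, integral_withDensity_eq_integral_smul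
    (GP.w_meas.real_toNNReal) F]
  refine setIntegral_congr_fun measurableSet_Icc fun x hx => ?_
  rw [NNReal.smul_def, Real.coe_toNNReal _ (GP.w_pos hx.1).le, smul_eq_mul]

lemma GP.lintegral_gaussMeasure (F : ℝ → ℝ≥0∞) :
    ∫⁻ x, F x ∂gaussMeasure = ∫⁻ x in Icc (0:ℝ) 1, ENNReal.ofReal (GP.w x) * F x := by
  have h1 : gaussMeasure = (volume.restrict (Set.Icc (0 : ℝ) 1)).withDensity
      (fun θ => ENNReal.ofReal (GP.w θ)) := rfl
  rw [h1, lintegral_withDensity_eq_lintegral_mul_non_measurable _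
    (GP.w_meas.ennreal_ofReal)
    (Eventually.of_forall fun x => ofReal_lt_top) F]
  rfl

/-- 1-D version of the lintegral change of variables. -/
lemma GP.lintegral_image_eq_lintegral_abs_deriv_mul {s : Set ℝ} {f : ℝ → ℝ} {f' : ℝ → ℝ}
    (hs : MeasurableSet s) (hf' : ∀ x ∈ s, HasDerivWithinAt f (f' x) s x)
    (hf : InjOn f s) (g : ℝ → ℝ≥0∞) :
    ∫⁻ x in f '' s, g x = ∫⁻ x in s, ENNReal.ofReal |f' x| * g (f x) := by
  simpa only [ContinuousLinearMap.det_toSpanSingleton] using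
    lintegral_image_eq_lintegral_abs_det_fderiv_mul volume hs
      (fun x hx => (hf' x hx).hasFDerivWithinAt) hf g

noncomputable def GP.T (n : ℕ) (θ : ℝ) : ℝ := 1 / (θ + (n : ℝ) + 1)

lemma GP.ennnorm_mul (a b : ℝ) :
    (‖a * b‖₊ : ℝ≥0∞) = ENNReal.ofReal |a| * (‖b‖₊ : ℝ≥0∞) := by
  rw [← enorm_eq_nnnorm, ← enorm_eq_nnnorm, Real.enorm_eq_ofReal_abs, Real.enorm_eq_ofReal_abs, abs_mul,
    ENNReal.ofReal_mul (abs_nonneg _)]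

lemma GP.T_hasDerivAt (n : ℕ) {θ : ℝ} (hθ : 0 ≤ θ) :
    HasDerivAt (GP.T n) (-(1 / (θ + (n:ℝ) + 1) ^ 2)) θ := by
  have hne : θ + (n:ℝ) + 1 ≠ 0 := by positivity
  have h1 : HasDerivAt (fun t : ℝ => t + (n:ℝ) + 1) 1 θ :=
    ((hasDerivAt_id θ).add_const ((n:ℝ))).add_const 1
  have := h1.inv hne
  simp only [one_div] at this ⊢
  unfold GP.T
  simp only [one_div]
  rw [show -((θ + (n:ℝ) + 1) ^ 2)⁻¹ = -1 / (θ + (n:ℝ) + 1) ^ 2 by ring]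
  exact this

lemma GP.T_injOn (n : ℕ) : InjOn (GP.T n) (Ici 0) := by
  intro a ha b hb hab
  unfold GP.T at hab
  have ha' : a + (n:ℝ) + 1 > 0 := by have : (0:ℝ) ≤ a := ha; positivity
  have hb' : b + (n:ℝ) + 1 > 0 := by have : (0:ℝ) ≤ b := hb; positivity
  field_simp at hab
  linarith

lemma GP.T_mem_Icc (n : ℕ) {θ : ℝ} (hθ : 0 ≤ θ) : GP.T n θ ∈ Icc (0:ℝ) 1 := by
  have h1 : (0:ℝ) < θ + (n:ℝ) + 1 := by positivity
  constructor
  · unfold GP.T; positivity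
  · unfold GP.T
    rw [div_le_one h1]
    have : (0:ℝ) ≤ (n:ℝ) := Nat.cast_nonneg n
    linarith

lemma GP.gaussMap_T (n : ℕ) {θ : ℝ} (hθ : θ ∈ Ico (0:ℝ) 1) : gaussMap (GP.T n θ) = θ := by
  have h1 : (0:ℝ) < θ + (n:ℝ) + 1 := by have := hθ.1; positivity
  have hne : GP.T n θ ≠ 0 := by unfold GP.T; positivity
  have hinv : 1 / GP.T n θ = θ + (n:ℝ) + 1 := by
    unfold GP.T; rw [one_div_one_div]
  have hfloor : ⌊θ + (n:ℝ) + 1⌋ = (n:ℤ) + 1 := by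
    rw [Int.floor_eq_iff]
    push_cast
    constructor <;> [linarith [hθ.1]; linarith [hθ.2]]
  unfold gaussMap
  rw [if_neg hne, hinv, hfloor]
  push_cast
  ring

lemma GP.T_image (n : ℕ) :
    GP.T n '' (Ioo 0 1) = Ioo (1 / ((n:ℝ) + 2)) (1 / ((n:ℝ) + 1)) := by
  ext x
  constructor
  · rintro ⟨θ, hθ, rfl⟩
    have h0 : (0:ℝ) < θ + (n:ℝ) + 1 := by have := hθ.1; positivity
    have h2 : (0:ℝ) < (n:ℝ) + 2 := by positivity
    have h1 : (0:ℝ) < (n:ℝ) + 1 := by positivity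
    constructor
    · unfold GP.T
      exact div_lt_div_of_pos_left one_pos h0 (by linarith [hθ.2])
    · unfold GP.T
      exact div_lt_div_of_pos_left one_pos h1 (by linarith [hθ.1])
  · rintro ⟨hx1, hx2⟩
    have h2 : (0:ℝ) < (n:ℝ) + 2 := by positivity
    have h1 : (0:ℝ) < (n:ℝ) + 1 := by positivity
    have hx0 : 0 < x := lt_trans (by positivity) hx1
    refine ⟨1 / x - ((n:ℝ) + 1), ?_, ?_⟩
    · constructor
      · have : (n:ℝ) + 1 < 1 / x := by
          rw [lt_one_div (by positivity) hx0]
          exact hx2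
        linarith
      · have : 1 / x < (n:ℝ) + 2 := by
          rw [one_div_lt hx0 h2]
          exact hx1
        linarith
    · unfold GP.T
      have : 1 / x - ((n:ℝ) + 1) + (n:ℝ) + 1 = 1 / x := by ring
      rw [this, one_div_one_div]

lemma GP.I_disjoint : Pairwise (Function.onFun Disjoint
    (fun n : ℕ => Ioo (1 / ((n:ℝ) + 2)) (1 / ((n:ℝ) + 1)))) := by
  have key : ∀ m n : ℕ, m < n → Disjoint (Ioo (1 / ((m:ℝ) + 2)) (1 / ((m:ℝ) + 1)))
      (Ioo (1 / ((n:ℝ) + 2)) (1 / ((n:ℝ) + 1))) := by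
    intro m n hmn
    apply Set.disjoint_left.2
    rintro x ⟨hx1, _⟩ ⟨_, hx4⟩
    have h1 : (0:ℝ) < (n:ℝ) + 1 := by positivity
    have h2 : (0:ℝ) < (m:ℝ) + 2 := by positivity
    have hle : 1 / ((n:ℝ) + 1) ≤ 1 / ((m:ℝ) + 2) := by
      apply one_div_le_one_div_of_le h2
      have : (m:ℝ) + 1 ≤ (n:ℝ) := by exact_mod_cast hmn
      linarith
    linarith
  intro m n hmn
  rcases lt_or_gt_of_ne hmn with hh | hh
  · exact key m n hh
  · exact (key n m hh).symm

lemma GP.union_subset : (⋃ n : ℕ, Ioo (1 / ((n:ℝ) + 2)) (1 / ((n:ℝ) + 1))) ⊆ Ioo (0:ℝ) 1 := by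
  refine iUnion_subset fun n => ?_
  refine Ioo_subset_Ioo ?_ ?_
  · positivity
  · rw [div_le_one (by positivity)]
    have : (0:ℝ) ≤ (n:ℝ) := n.cast_nonneg
    linarith

lemma GP.union_ae : Ioo (0:ℝ) 1 =ᵐ[volume]
    ⋃ n : ℕ, Ioo (1 / ((n:ℝ) + 2)) (1 / ((n:ℝ) + 1)) := by
  rw [MeasureTheory.ae_eq_set]
  constructor
  · refine measure_mono_null ?_
      ((countable_range (fun m : ℕ => 1/((m:ℝ)+1))).measure_zero _)
    rintro x ⟨hx, hxU⟩
    have hx0 : (0:ℝ) < x := hx.1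
    have h1x : 1 < 1/x := by rw [one_lt_div hx0]; exact hx.2
    set k : ℤ := ⌊1/x⌋ with hk
    have hk1 : 1 ≤ k := Int.le_floor.2 (by exact_mod_cast h1x.le)
    have hklb : (k:ℝ) ≤ 1/x := Int.floor_le _
    have hkub : 1/x < (k:ℝ)+1 := Int.lt_floor_add_one _
    have hkR : (1:ℝ) ≤ (k:ℝ) := by exact_mod_cast hk1
    by_cases hcase : (k:ℝ) < 1/x
    · exfalso
      apply hxU
      set n := (k-1).toNat with hn
      have hnk : ((n:ℤ)) = k - 1 := Int.toNat_of_nonneg (by omega)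
      have hnR : (n:ℝ) = (k:ℝ) - 1 := by exact_mod_cast hnk
      refine mem_iUnion.2 ⟨n, ?_, ?_⟩
      · rw [hnR, show (k:ℝ) - 1 + 2 = (k:ℝ) + 1 by ring,
          one_div_lt (by positivity) hx0]
        exact hkub
      · rw [hnR, show (k:ℝ) - 1 + 1 = (k:ℝ) by ring,
          lt_one_div hx0 (by positivity)]
        exact hcase
    · have hkeq : (k:ℝ) = 1/x := le_antisymm hklb (not_lt.1 hcase)
      have hxk : x = 1/(k:ℝ) := by rw [hkeq, one_div_one_div]
      refine ⟨(k-1).toNat, ?_⟩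
      have hnR : (((k-1).toNat : ℕ):ℝ) = (k:ℝ) - 1 := by
        exact_mod_cast Int.toNat_of_nonneg (by omega : (0:ℤ) ≤ k - 1)
      show 1/((((k-1).toNat : ℕ):ℝ) + 1) = x
      rw [hnR, show (k:ℝ) - 1 + 1 = (k:ℝ) by ring, ← hxk]
  · rw [diff_eq_empty.2 GP.union_subset]
    exact measure_empty

lemma GP.hasSum_tele {θ : ℝ} (hθ : 0 < θ) :
    HasSum (fun n : ℕ => (1 + θ) / ((θ + (n:ℝ) + 1) * (θ + (n:ℝ) + 2))) 1 := by
  have hnn : ∀ n : ℕ, 0 ≤ (1 + θ) / ((θ + (n:ℝ) + 1) * (θ + (n:ℝ) + 2)) := by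
    intro n; positivity
  rw [hasSum_iff_tendsto_nat_of_nonneg hnn]
  set u : ℕ → ℝ := fun n => (1 + θ) / (θ + (n:ℝ) + 1) with hu
  have hterm : ∀ n : ℕ, (1 + θ) / ((θ + (n:ℝ) + 1) * (θ + (n:ℝ) + 2)) = u n - u (n + 1) := by
    intro n
    have h1 : (0:ℝ) < θ + (n:ℝ) + 1 := by positivity
    have h2 : (0:ℝ) < θ + (n:ℝ) + 2 := by positivity
    simp only [hu]
    push_cast
    field_simp
    ring
  have hsum : ∀ N : ℕ, (∑ i ∈ Finset.range N,
      (1 + θ) / ((θ + (i:ℝ) + 1) * (θ + (i:ℝ) + 2))) = u 0 - u N := by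
    intro N
    rw [← Finset.sum_range_sub' u N]
    exact Finset.sum_congr rfl fun i _ => hterm i
  simp only [hsum]
  have hu0 : u 0 = 1 := by
    simp only [hu, Nat.cast_zero, add_zero]
    rw [div_eq_one_iff_eq (by positivity : (0:ℝ) < θ + 1).ne']
    try ring
  have hlim : Tendsto u atTop (nhds 0) := by
    have h1 : Tendsto (fun n : ℕ => θ + (n:ℝ) + 1) atTop atTop := by
      apply tendsto_atTop_add_const_right
      apply tendsto_atTop_add_const_left
      exact tendsto_natCast_atTop_atTop
    have := h1.inv_tendsto_atTop
    have h2 : Tendsto (fun n : ℕ => (1 + θ) * (θ + (n:ℝ) + 1)⁻¹) atTop (nhds ((1+θ) * 0)) :=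
      this.const_mul _
    simp only [mul_zero] at h2
    have heq : u = fun n : ℕ => (1 + θ) * (θ + (n:ℝ) + 1)⁻¹ := by
      funext n; simp [hu, div_eq_mul_inv]
    rw [heq]; exact h2
  have : Tendsto (fun N : ℕ => u 0 - u N) atTop (nhds (u 0 - 0)) :=
    tendsto_const_nhds.sub hlim
  simpa [hu0] using this

lemma GP.integrable_mul {g h : ℝ → ℝ} (hg : MemLp g 2 gaussMeasure)
    (hh : MemLp h 2 gaussMeasure) :
    Integrable (fun x => g x * h x) gaussMeasure := by
  refine Integrable.mono' (hg.integrable_sq.add hh.integrable_sq) (hg.1.mul hh.1) ?_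
  refine Eventually.of_forall fun x => ?_
  simp only [Pi.add_apply]
  rw [Real.norm_eq_abs, abs_mul]
  nlinarith [mul_nonneg (abs_nonneg (g x)) (abs_nonneg (h x)), sq_abs (g x), sq_abs (h x),
    sq_nonneg (|g x| - |h x|)]

/-- The Gauss map sends `gaussMeasure`-null sets to null preimages. -/
lemma GP.gaussMap_nullpres {N : Set ℝ} (hN : gaussMeasure N = 0) :
    gaussMeasure (gaussMap ⁻¹' N) = 0 := by
  set Nm := toMeasurable gaussMeasure N with hNm
  have hNmeas : MeasurableSet Nm := measurableSet_toMeasurable _ _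
  have hNnull : gaussMeasure Nm = 0 := by rw [hNm, measure_toMeasurable]; exact hN
  have hNsub : N ⊆ Nm := subset_toMeasurable _ _
  have hvol : volume (Nm ∩ Icc 0 1) = 0 := by
    rw [gaussMeasure, withDensity_apply _ hNmeas, Measure.restrict_restrict hNmeas] at hNnull
    have hwm : Measurable fun θ : ℝ => ENNReal.ofReal (1 / (Real.log 2 * (1 + θ))) :=
      GP.w_meas.ennreal_ofReal
    rw [lintegral_eq_zero_iff hwm] at hNnull
    have hfalse : ∀ᵐ x ∂(volume.restrict (Nm ∩ Icc 0 1)), False := by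
      filter_upwards [ae_restrict_mem (hNmeas.inter measurableSet_Icc), hNnull] with x hx h0
      have hw := GP.w_pos hx.2.1
      rw [Pi.zero_apply, ENNReal.ofReal_eq_zero] at h0
      unfold GP.w at hw
      linarith
    have h2 := ae_iff.1 hfalse
    simp only [not_false_iff, setOf_true] at h2
    rwa [Measure.restrict_apply_univ] at h2
  have hcover : gaussMap ⁻¹' N ∩ Icc 0 1 ⊆
      {0} ∪ ⋃ n : ℕ, GP.T n '' (Nm ∩ Icc 0 1 ∩ Ico 0 1) := by
    rintro x ⟨hxN, hx01⟩
    rcases eq_or_ne x 0 with rfl | hx0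
    · exact Or.inl rfl
    right
    have hx0' : 0 < x := lt_of_le_of_ne hx01.1 (Ne.symm hx0)
    have h1x : 1 ≤ 1/x := by rw [le_div_iff₀ hx0']; linarith [hx01.2]
    set k : ℤ := ⌊1/x⌋ with hk
    have hk1 : 1 ≤ k := Int.le_floor.2 (by exact_mod_cast h1x)
    have hθIco : 1/x - (k:ℝ) ∈ Ico (0:ℝ) 1 := by
      constructor
      · linarith [Int.floor_le (1/x)]
      · linarith [Int.lt_floor_add_one (1/x)]
    have hGx : gaussMap x = 1/x - (k:ℝ) := by unfold gaussMap; rw [if_neg hx0]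
    have hθN : 1/x - (k:ℝ) ∈ Nm := hNsub (by rw [← hGx]; exact hxN)
    set n := (k-1).toNat with hn
    have hnR : (n:ℝ) = (k:ℝ) - 1 := by
      exact_mod_cast Int.toNat_of_nonneg (by omega : (0:ℤ) ≤ k - 1)
    refine mem_iUnion.2 ⟨n, 1/x - (k:ℝ), ⟨⟨hθN, ⟨hθIco.1, hθIco.2.le⟩⟩, hθIco⟩, ?_⟩
    show 1 / (1/x - (k:ℝ) + (n:ℝ) + 1) = x
    rw [hnR, show 1/x - (k:ℝ) + ((k:ℝ) - 1) + 1 = 1/x by ring, one_div_one_div]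
  have himg : ∀ n : ℕ, volume (GP.T n '' (Nm ∩ Icc 0 1 ∩ Ico 0 1)) = 0 := by
    intro n
    have hRmeas : MeasurableSet (Nm ∩ Icc 0 1 ∩ Ico 0 1) :=
      (hNmeas.inter measurableSet_Icc).inter measurableSet_Ico
    have hRnull : volume (Nm ∩ Icc 0 1 ∩ Ico 0 1) = 0 :=
      measure_mono_null inter_subset_left hvol
    have hcv := GP.lintegral_image_eq_lintegral_abs_deriv_mul (f := GP.T n)
      (f' := fun θ => -(1 / (θ + (n:ℝ) + 1) ^ 2)) hRmeas
      (fun θ hθ => (GP.T_hasDerivAt n hθ.2.1).hasDerivWithinAt)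
      ((GP.T_injOn n).mono (fun θ hθ => hθ.2.1))
      (fun _ => 1)
    rw [← setLIntegral_one, hcv, setLIntegral_measure_zero _ _ hRnull]
  have habs : gaussMeasure ≪ volume.restrict (Icc 0 1) :=
    withDensity_absolutelyContinuous _ _
  apply habs
  rw [Measure.restrict_apply' measurableSet_Icc]
  refine measure_mono_null hcover (measure_union_null ?_ (measure_iUnion_null himg))
  exact measure_singleton 0

end aux

section core

theorem GP.core (f g h : ℝ → ℝ)
    (hf : ContinuousOn f (Set.Icc (0 : ℝ) 1))
    (hgm : StronglyMeasurable g) (hhm : StronglyMeasurable h)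
    (hg : MemLp g 2 gaussMeasure) (hh : MemLp h 2 gaussMeasure) :
    ∫ θ, f θ * g (gaussMap θ) * h (gaussMap θ) ∂gaussMeasure =
      ∫ θ, gaussOp f θ * g θ * h θ ∂gaussMeasure := by
  have hlog := GP.log2_pos
  obtain ⟨C, hC⟩ : ∃ C : ℝ, ∀ x ∈ Icc (0:ℝ) 1, ‖f x‖ ≤ C :=
    isCompact_Icc.exists_bound_of_continuousOn hf
  have hC0 : 0 ≤ C := le_trans (norm_nonneg _) (hC 0 (by norm_num))
  set B : ℝ → ℝ := fun θ => GP.w θ * (g θ * h θ) with hB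
  set ψ : ℕ → ℝ → ℝ := fun n θ =>
    f (1 / (θ + (n:ℝ) + 1)) * ((1 + θ) / ((θ + (n:ℝ) + 1) * (θ + (n:ℝ) + 2))) * B θ with hψ
  set Φ : ℝ → ℝ := fun x => GP.w x * (f x * g (gaussMap x) * h (gaussMap x)) with hΦ
  set I : ℕ → Set ℝ := fun n => Ioo (1 / ((n:ℝ) + 2)) (1 / ((n:ℝ) + 1)) with hI
  -- pointwise change-of-variables identity
  have hpoint : ∀ (n : ℕ), ∀ θ ∈ Ioo (0:ℝ) 1,
      |(-(1 / (θ + (n:ℝ) + 1) ^ 2))| * Φ (GP.T n θ) = ψ n θ := by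
    intro n θ hθ
    have h0 : (0:ℝ) < θ + (n:ℝ) + 1 := by have := hθ.1; positivity
    have h2 : (0:ℝ) < θ + (n:ℝ) + 2 := by have := hθ.1; positivity
    have hG : gaussMap (GP.T n θ) = θ := GP.gaussMap_T n ⟨hθ.1.le, hθ.2⟩
    have habs : |(-(1 / (θ + (n:ℝ) + 1) ^ 2))| = 1 / (θ + (n:ℝ) + 1) ^ 2 := by
      rw [abs_neg, abs_of_pos (by positivity)]
    have hTval : GP.T n θ = 1 / (θ + (n:ℝ) + 1) := rfl
    simp only [hΦ, hψ, hB]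
    rw [hG, habs, hTval]
    unfold GP.w
    have h1θ : (0:ℝ) < 1 + θ := by have := hθ.1; linarith
    have hden : 1 + 1 / (θ + (n:ℝ) + 1) = (θ + (n:ℝ) + 2) / (θ + (n:ℝ) + 1) := by
      field_simp; ring
    rw [hden]
    field_simp
  -- measurability of the pieces
  have hTcont : ∀ n : ℕ, ContinuousOn (fun θ : ℝ => 1 / (θ + (n:ℝ) + 1)) (Ioo 0 1) := by
    intro n
    apply ContinuousOn.div continuousOn_const (by fun_prop)
    intro θ hθ; have := hθ.1; positivity
  have hBsm : StronglyMeasurable B := (GP.w_meas.stronglyMeasurable).mul (hgm.mul hhm)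
  have hψmeas : ∀ n : ℕ, AEStronglyMeasurable (ψ n) (volume.restrict (Ioo 0 1)) := by
    intro n
    have h1 : ContinuousOn (fun θ => f (1 / (θ + (n:ℝ) + 1))) (Ioo 0 1) :=
      hf.comp (hTcont n) (fun θ hθ => GP.T_mem_Icc n hθ.1.le)
    have h2 : ContinuousOn
        (fun θ : ℝ => (1 + θ) / ((θ + (n:ℝ) + 1) * (θ + (n:ℝ) + 2))) (Ioo 0 1) := by
      apply ContinuousOn.div (by fun_prop) (by fun_prop)
      intro θ hθ
      have h0 : (0:ℝ) < θ + (n:ℝ) + 1 := by have := hθ.1; positivity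
      have h2' : (0:ℝ) < θ + (n:ℝ) + 2 := by have := hθ.1; positivity
      positivity
    exact ((h1.aestronglyMeasurable measurableSet_Ioo).mul
      (h2.aestronglyMeasurable measurableSet_Ioo)).mul hBsm.aestronglyMeasurable
  -- change of variables, Bochner version
  have hIimg : ∀ n : ℕ, I n = GP.T n '' (Ioo 0 1) := fun n => (GP.T_image n).symm
  have hderiv : ∀ (n : ℕ), ∀ θ ∈ Ioo (0:ℝ) 1,
      HasDerivWithinAt (GP.T n) (-(1 / (θ + (n:ℝ) + 1) ^ 2)) (Ioo 0 1) θ :=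
    fun n θ hθ => (GP.T_hasDerivAt n hθ.1.le).hasDerivWithinAt
  have hinj : ∀ n : ℕ, InjOn (GP.T n) (Ioo 0 1) :=
    fun n => (GP.T_injOn n).mono (fun θ hθ => hθ.1.le)
  have hCoV : ∀ n : ℕ, ∫ x in I n, Φ x = ∫ θ in Ioo (0:ℝ) 1, ψ n θ := by
    intro n
    rw [hIimg n,
      integral_image_eq_integral_abs_deriv_smul measurableSet_Ioo (hderiv n) (hinj n) Φ]
    refine setIntegral_congr_fun measurableSet_Ioo fun θ hθ => ?_
    rw [smul_eq_mul]
    exact hpoint n θ hθ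
  -- change of variables, lintegral version for norms
  have hCoVl : ∀ n : ℕ,
      ∫⁻ x in I n, (‖Φ x‖₊ : ℝ≥0∞) = ∫⁻ θ in Ioo (0:ℝ) 1, (‖ψ n θ‖₊ : ℝ≥0∞) := by
    intro n
    rw [hIimg n, GP.lintegral_image_eq_lintegral_abs_deriv_mul measurableSet_Ioo
      (hderiv n) (hinj n)]
    refine setLIntegral_congr_fun measurableSet_Ioo (
      fun θ hθ => ?_)
    rw [← hpoint n θ hθ]
    conv_rhs => rw [GP.ennnorm_mul]
    rw [abs_abs]
  -- the uniform bound
  have hbound : ∀ θ ∈ Ioo (0:ℝ) 1,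
      (∑' n : ℕ, (‖ψ n θ‖₊ : ℝ≥0∞)) ≤ ENNReal.ofReal (C * |B θ|) := by
    intro θ hθ
    have hθ0 : (0:ℝ) < θ := hθ.1
    have hle : ∀ n : ℕ, (‖ψ n θ‖₊ : ℝ≥0∞) ≤
        ENNReal.ofReal ((1 + θ) / ((θ + (n:ℝ) + 1) * (θ + (n:ℝ) + 2))) *
          ENNReal.ofReal (C * |B θ|) := by
      intro n
      have h0 : (0:ℝ) < θ + (n:ℝ) + 1 := by positivity
      have h2 : (0:ℝ) < θ + (n:ℝ) + 2 := by positivity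
      have hc : (0:ℝ) ≤ (1 + θ) / ((θ + (n:ℝ) + 1) * (θ + (n:ℝ) + 2)) := by positivity
      rw [← enorm_eq_nnnorm, Real.enorm_eq_ofReal_abs, ← ENNReal.ofReal_mul hc]
      apply ENNReal.ofReal_le_ofReal
      have hfb : |f (1 / (θ + (n:ℝ) + 1))| ≤ C := by
        have := hC _ (GP.T_mem_Icc n hθ.1.le)
        rwa [Real.norm_eq_abs] at this
      simp only [hψ]
      rw [abs_mul, abs_mul, abs_of_nonneg hc]
      calc |f (1 / (θ + (n:ℝ) + 1))| * ((1 + θ) / ((θ + (n:ℝ) + 1) * (θ + (n:ℝ) + 2))) * |B θ|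
          ≤ C * ((1 + θ) / ((θ + (n:ℝ) + 1) * (θ + (n:ℝ) + 2))) * |B θ| := by
            gcongr
        _ = (1 + θ) / ((θ + (n:ℝ) + 1) * (θ + (n:ℝ) + 2)) * (C * |B θ|) := by ring
    have hnn : ∀ n : ℕ, (0:ℝ) ≤ (1 + θ) / ((θ + (n:ℝ) + 1) * (θ + (n:ℝ) + 2)) := by
      intro n
      have h0 : (0:ℝ) < θ + (n:ℝ) + 1 := by positivity
      have h2 : (0:ℝ) < θ + (n:ℝ) + 2 := by positivity
      positivity
    have hsum := GP.hasSum_tele hθ0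
    calc (∑' n : ℕ, (‖ψ n θ‖₊ : ℝ≥0∞))
        ≤ ∑' n : ℕ, ENNReal.ofReal ((1 + θ) / ((θ + (n:ℝ) + 1) * (θ + (n:ℝ) + 2))) *
            ENNReal.ofReal (C * |B θ|) := ENNReal.tsum_le_tsum hle
      _ = (∑' n : ℕ, ENNReal.ofReal ((1 + θ) / ((θ + (n:ℝ) + 1) * (θ + (n:ℝ) + 2)))) *
            ENNReal.ofReal (C * |B θ|) := ENNReal.tsum_mul_right
      _ = ENNReal.ofReal (C * |B θ|) := by
            rw [← ENNReal.ofReal_tsum_of_nonneg hnn hsum.summable, hsum.tsum_eq,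
              ENNReal.ofReal_one, one_mul]
  -- finiteness of the sum of lintegrals
  have hμgh : (∫⁻ x, (‖g x * h x‖₊ : ℝ≥0∞) ∂gaussMeasure) < ⊤ := (GP.integrable_mul hg hh).2
  have hkey : (∑' n : ℕ, ∫⁻ θ in Ioo (0:ℝ) 1, (‖ψ n θ‖₊ : ℝ≥0∞)) ≠ ⊤ := by
    rw [← lintegral_tsum (f := fun n θ => (‖ψ n θ‖₊ : ℝ≥0∞)) (fun n => (hψmeas n).enorm)]
    have hstep1 : ∫⁻ θ in Ioo (0:ℝ) 1, (∑' n : ℕ, (‖ψ n θ‖₊ : ℝ≥0∞)) ≤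
        ∫⁻ θ in Ioo (0:ℝ) 1, ENNReal.ofReal (C * |B θ|) := by
      refine lintegral_mono_ae ?_
      filter_upwards [ae_restrict_mem measurableSet_Ioo] with θ hθ
      exact hbound θ hθ
    have hstep2 : ∫⁻ θ in Ioo (0:ℝ) 1, ENNReal.ofReal (C * |B θ|) ≤
        ENNReal.ofReal C * ∫⁻ θ in Icc (0:ℝ) 1, ENNReal.ofReal |B θ| := by
      rw [← lintegral_const_mul' _ _ ENNReal.ofReal_ne_top]
      refine lintegral_mono' (Measure.restrict_mono Ioo_subset_Icc_self le_rfl) ?_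
      intro θ
      exact le_of_eq (ENNReal.ofReal_mul hC0)
    have hstep3 : ∫⁻ θ in Icc (0:ℝ) 1, ENNReal.ofReal |B θ| =
        ∫⁻ x, (‖g x * h x‖₊ : ℝ≥0∞) ∂gaussMeasure := by
      rw [GP.lintegral_gaussMeasure (fun x => (‖g x * h x‖₊ : ℝ≥0∞))]
      refine setLIntegral_congr_fun measurableSet_Icc (
        fun θ hθ => ?_)
      rw [hB, ← enorm_eq_nnnorm, Real.enorm_eq_ofReal_abs]
      simp only []
      rw [abs_mul, abs_of_nonneg (GP.w_pos hθ.1).le, ENNReal.ofReal_mul (GP.w_pos hθ.1).le]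
    refine ne_top_of_le_ne_top ?_ (hstep1.trans (hstep2.trans_eq (by rw [hstep3])))
    exact ENNReal.mul_ne_top ENNReal.ofReal_ne_top hμgh.ne
  -- integrability of Φ on the union
  have hImeas : ∀ n : ℕ, MeasurableSet (I n) := fun n => measurableSet_Ioo
  have hΦmeasIoo : AEStronglyMeasurable Φ (volume.restrict (Ioo 0 1)) := by
    have h1 : AEStronglyMeasurable f (volume.restrict (Ioo 0 1)) :=
      (hf.mono Ioo_subset_Icc_self).aestronglyMeasurable measurableSet_Ioo
    exact (GP.w_meas.stronglyMeasurable.aestronglyMeasurable).mul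
      ((h1.mul ((hgm.comp_measurable GP.measurable_gaussMap).aestronglyMeasurable)).mul
        ((hhm.comp_measurable GP.measurable_gaussMap).aestronglyMeasurable))
  have hΦint : IntegrableOn Φ (⋃ n, I n) := by
    constructor
    · exact hΦmeasIoo.mono_measure (Measure.restrict_mono GP.union_subset le_rfl)
    · show (∫⁻ x in ⋃ n, I n, (‖Φ x‖₊ : ℝ≥0∞)) < ⊤
      rw [lintegral_iUnion hImeas GP.I_disjoint, tsum_congr hCoVl]
      exact lt_top_iff_ne_top.2 hkey
  -- main computation
  rw [GP.integral_gaussMeasure (fun θ => f θ * g (gaussMap θ) * h (gaussMap θ)),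
    GP.integral_gaussMeasure (fun θ => gaussOp f θ * g θ * h θ)]
  calc ∫ x in Icc (0:ℝ) 1, GP.w x * (f x * g (gaussMap x) * h (gaussMap x))
      = ∫ x in Ioo (0:ℝ) 1, Φ x := setIntegral_congr_set (Ioo_ae_eq_Icc).symm
    _ = ∫ x in ⋃ n, I n, Φ x := setIntegral_congr_set GP.union_ae
    _ = ∑' n : ℕ, ∫ x in I n, Φ x := integral_iUnion hImeas GP.I_disjoint hΦint
    _ = ∑' n : ℕ, ∫ θ in Ioo (0:ℝ) 1, ψ n θ := tsum_congr hCoV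
    _ = ∫ θ in Ioo (0:ℝ) 1, ∑' n : ℕ, ψ n θ := (integral_tsum hψmeas hkey).symm
    _ = ∫ θ in Ioo (0:ℝ) 1, gaussOp f θ * B θ := by
        refine integral_congr_ae (Filter.Eventually.of_forall fun θ => ?_)
        simp only [hψ, gaussOp]
        exact tsum_mul_right
    _ = ∫ x in Ioo (0:ℝ) 1, GP.w x * (gaussOp f x * g x * h x) := by
        refine integral_congr_ae (Filter.Eventually.of_forall fun θ => ?_)
        simp only [hB]
        ring
    _ = ∫ x in Icc (0:ℝ) 1, GP.w x * (gaussOp f x * g x * h x) :=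
        setIntegral_congr_set Ioo_ae_eq_Icc

end core

/-- For `f` continuous on `[0,1]` and `g, h ∈ L²(μ)`:
`∫ f(θ) g(G θ) h(G θ) dμ = ∫ 𝔾(f)(θ) g(θ) h(θ) dμ`, i.e.
`V_G* M_f V_G = M_{𝔾(f)}` on `L²(μ)`. -/
theorem gaussOp_conjugation (f g h : ℝ → ℝ)
    (hf : ContinuousOn f (Set.Icc (0 : ℝ) 1))
    (hg : MemLp g 2 gaussMeasure) (hh : MemLp h 2 gaussMeasure) :
    ∫ θ, f θ * g (gaussMap θ) * h (gaussMap θ) ∂gaussMeasure =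
      ∫ θ, gaussOp f θ * g θ * h θ ∂gaussMeasure := by
  set g' := hg.1.mk g with hg'def
  set h' := hh.1.mk h with hh'def
  have hgae : g =ᵐ[gaussMeasure] g' := hg.1.ae_eq_mk
  have hhae : h =ᵐ[gaussMeasure] h' := hh.1.ae_eq_mk
  have hg' : MemLp g' 2 gaussMeasure := hg.ae_eq hgae
  have hh' : MemLp h' 2 gaussMeasure := hh.ae_eq hhae
  have hgG : (fun θ => g (gaussMap θ)) =ᵐ[gaussMeasure] fun θ => g' (gaussMap θ) := by
    have hnull : gaussMeasure {x | g x ≠ g' x} = 0 := hgae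
    have := GP.gaussMap_nullpres hnull
    refine measure_mono_null ?_ this
    intro x hx
    exact hx
  have hhG : (fun θ => h (gaussMap θ)) =ᵐ[gaussMeasure] fun θ => h' (gaussMap θ) := by
    have hnull : gaussMeasure {x | h x ≠ h' x} = 0 := hhae
    have := GP.gaussMap_nullpres hnull
    refine measure_mono_null ?_ this
    intro x hx
    exact hx
  have L : ∫ θ, f θ * g (gaussMap θ) * h (gaussMap θ) ∂gaussMeasure =
      ∫ θ, f θ * g' (gaussMap θ) * h' (gaussMap θ) ∂gaussMeasure := by
    refine integral_congr_ae ?_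
    filter_upwards [hgG, hhG] with θ h1 h2
    rw [h1, h2]
  have R : ∫ θ, gaussOp f θ * g θ * h θ ∂gaussMeasure =
      ∫ θ, gaussOp f θ * g' θ * h' θ ∂gaussMeasure := by
    refine integral_congr_ae ?_
    filter_upwards [hgae, hhae] with θ h1 h2
    rw [h1, h2]
  rw [L, R]
  exact GP.core f g' h' hf hg.1.stronglyMeasurable_mk hh.1.stronglyMeasurable_mk hg' hh'
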